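/- Fix n ≥ 3 and 1 ≤ i ≤ n-1. The map deleting the second letter n of π is a bijection from the set of permutations of [n] avoiding {1243, 1324} with π_1 = i and π_2 = n, onto the set of permutations of [n-1] avoiding {1243, 1324} with first letter i. Moreover, if π maps to π', then desc(π) = desc(π') when π'_2 < i, and desc(π) = desc(π') + 1 when π'_2 > i. -/

import Mathlib

/-- The word `w` contains the pattern `p`: some subsequence of `w` is
order-isomorphic to `p`. -/
def ContainsPat (w p : List ℕ) : Prop :=
  ∃ s : List ℕ, s.Sublist w ∧ s.length = p.length ∧
    ∀ i j : ℕ, i < p.length → j < p.length → (s[i]! < s[j]! ↔ p[i]! < p[j]!)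

/-- The word `w` avoids the pattern `p`. -/
def AvoidsPat (w p : List ℕ) : Prop := ¬ ContainsPat w p

/-- `π` is the one-line notation of a permutation of `{1,…,n}`. -/
def IsPermList (n : ℕ) (π : List ℕ) : Prop :=
  π.Perm ((List.range n).map (· + 1))

/-- The number of descents of a word. -/
def descList (π : List ℕ) : ℕ :=
  ((List.range (π.length - 1)).filter (fun t => decide (π[t + 1]! < π[t]!))).length

namespace Stmt14Aux

lemma containsPat_sublist {s w p : List ℕ} (h : ContainsPat s p) (hs : s.Sublist w) :
    ContainsPat w p := by
  obtain ⟨u, hu, hl, hiso⟩ := h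
  exact ⟨u, hu.trans hs, hl, hiso⟩

lemma avoidsPat_sublist {s w p : List ℕ} (h : AvoidsPat w p) (hs : s.Sublist w) :
    AvoidsPat s p := fun hc => h (containsPat_sublist hc hs)

lemma descList_cons_cons (a b : ℕ) (l : List ℕ) :
    descList (a :: b :: l) = (if b < a then 1 else 0) + descList (b :: l) := by
  unfold descList
  have h1 : (a :: b :: l).length - 1 = l.length + 1 := by simp
  have h2 : (b :: l).length - 1 = l.length := by simp
  rw [h1, h2, List.range_succ_eq_map, List.filter_cons]
  rw [List.filter_map]
  simp only [List.getElem!_cons_zero, List.getElem!_cons_succ, Function.comp_def,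
    List.length_append, List.length_map]
  by_cases h : b < a <;> simp [h] <;> omega

lemma avoids_insert (i nn : ℕ) (t : List ℕ) (p : List ℕ) (m : ℕ)
    (hp : p.length = 4) (hm4 : m < 4)
    (h0 : p[0]! < p[m]!) (h1 : p[1]! < p[m]!)
    (hbound : ∀ x ∈ i :: nn :: t, x ≤ nn)
    (hav : AvoidsPat (i :: t) p) : AvoidsPat (i :: nn :: t) p := by
  rintro ⟨s, hs, hl, hiso⟩
  have hsl : s.length = 4 := by rw [hl, hp]
  have key : ∀ k, k < 4 → s[k]! = nn → p[k]! < p[m]! → False := by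
    intro k hk hkv hpk
    have hmem : s[m]! ∈ s := by
      have hm' : m < s.length := by omega
      rw [getElem!_pos s m hm']
      exact List.getElem_mem hm'
    have hle : s[m]! ≤ nn := hbound _ (hs.subset hmem)
    have := (hiso k m (by omega) (by omega)).mpr hpk
    omega
  cases hs with
  | cons _ h =>
    cases h with
    | cons _ h2 => exact hav ⟨s, h2.trans (List.sublist_cons_self i t), hl, hiso⟩
    | cons_cons _ h2 =>
      exact key 0 (by omega) (List.getElem!_cons_zero ..) h0
  | cons_cons _ h =>
    rename_i u
    cases h with
    | cons _ h2 => exact hav ⟨i :: u, h2.cons₂ i, hl, hiso⟩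
    | cons_cons _ h2 =>
      exact key 1 (by omega) (by simp [List.getElem!_cons_succ, List.getElem!_cons_zero]) h1

lemma mem_M {x k : ℕ} (h : x ∈ (List.range k).map (· + 1)) : 1 ≤ x ∧ x ≤ k := by
  simp only [List.mem_map, List.mem_range] at h
  obtain ⟨y, hy, rfl⟩ := h
  omega

lemma M_succ (k : ℕ) :
    (List.range (k + 1)).map (· + 1) = (List.range k).map (· + 1) ++ [k + 1] := by
  rw [List.range_succ, List.map_append]; rfl

lemma perm_insert_iff (k i : ℕ) (t : List ℕ) :
    (i :: t).Perm ((List.range k).map (· + 1)) ↔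
      (i :: (k + 1) :: t).Perm ((List.range (k + 1)).map (· + 1)) := by
  rw [M_succ]
  constructor
  · intro h
    exact ((List.Perm.swap (k + 1) i t).trans (h.cons (k + 1))).trans
      (List.perm_append_singleton _ _).symm
  · intro h
    have h2 : ((k + 1) :: i :: t).Perm ((k + 1) :: (List.range k).map (· + 1)) :=
      ((List.Perm.swap i (k + 1) t).trans h).trans (List.perm_append_singleton _ _)
    exact h2.cons_inv

lemma decomp (n i : ℕ) (hn : 3 ≤ n) {π : List ℕ} (hperm : IsPermList n π)
    (h0 : π[0]! = i) (h1 : π[1]! = n) : ∃ c r, π = i :: n :: c :: r := by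
  have hlen : π.length = n := by simpa using hperm.length_eq
  rcases π with _ | ⟨a, _ | ⟨b, _ | ⟨c, r⟩⟩⟩ <;> simp at hlen <;> try omega
  refine ⟨c, r, ?_⟩
  simp only [List.getElem!_cons_zero, List.getElem!_cons_succ] at h0 h1
  rw [h0, h1]

end Stmt14Aux

open Stmt14Aux in
/-- For `n ≥ 3` and `1 ≤ i ≤ n-1`, deleting the second letter `n` is a bijection
from `{1243,1324}`-avoiders of `[n]` starting `i, n` onto `{1243,1324}`-avoiders
of `[n-1]` with first letter `i`; it preserves `desc` when the image's second
letter is below `i` and lowers it by one when above `i`. -/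
theorem stmt14 (n i : ℕ) (hn : 3 ≤ n) (hi1 : 1 ≤ i) (hi : i ≤ n - 1) :
    Set.BijOn (fun π : List ℕ => π.eraseIdx 1)
      {π : List ℕ | IsPermList n π ∧ AvoidsPat π [1,2,4,3] ∧ AvoidsPat π [1,3,2,4] ∧
        π[0]! = i ∧ π[1]! = n}
      {σ : List ℕ | IsPermList (n - 1) σ ∧ AvoidsPat σ [1,2,4,3] ∧
        AvoidsPat σ [1,3,2,4] ∧ σ[0]! = i} ∧
    ∀ π ∈ {π : List ℕ | IsPermList n π ∧ AvoidsPat π [1,2,4,3] ∧ AvoidsPat π [1,3,2,4] ∧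
        π[0]! = i ∧ π[1]! = n},
      ((π.eraseIdx 1)[1]! < i → descList π = descList (π.eraseIdx 1)) ∧
      (i < (π.eraseIdx 1)[1]! → descList π = descList (π.eraseIdx 1) + 1) := by
  obtain ⟨k, rfl⟩ : ∃ k, n = k + 1 := ⟨n - 1, by omega⟩
  have hk : 2 ≤ k := by omega
  simp only [Nat.add_sub_cancel] at hi ⊢
  constructor
  · refine ⟨?_, ?_, ?_⟩
    · -- MapsTo
      rintro π ⟨hperm, hav1, hav2, h0, h1⟩
      obtain ⟨c, r, rfl⟩ := decomp (k + 1) i hn hperm h0 h1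
      have hsub : (i :: c :: r).Sublist (i :: (k + 1) :: c :: r) :=
        (List.sublist_cons_self (k + 1) (c :: r)).cons₂ i
      have hperm' : (i :: c :: r).Perm ((List.range k).map (· + 1)) :=
        (perm_insert_iff k i (c :: r)).mpr hperm
      refine ⟨?_, ?_, ?_, ?_⟩
      · simpa [List.eraseIdx, IsPermList] using hperm'
      · simpa [List.eraseIdx] using avoidsPat_sublist hav1 hsub
      · simpa [List.eraseIdx] using avoidsPat_sublist hav2 hsub
      · simp [List.eraseIdx]
    · -- InjOn
      rintro π ⟨hperm, _, _, h0, h1⟩ ρ ⟨hperm', _, _, h0', h1'⟩ heq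
      obtain ⟨c, r, rfl⟩ := decomp (k + 1) i hn hperm h0 h1
      obtain ⟨c', r', rfl⟩ := decomp (k + 1) i hn hperm' h0' h1'
      simp only [List.eraseIdx] at heq
      simp_all
    · -- SurjOn
      rintro σ ⟨hperm, hav1, hav2, h0⟩
      have hlen : σ.length = k := by simpa using hperm.length_eq
      rcases σ with _ | ⟨a, t⟩
      · simp at hlen; omega
      have ha : a = i := by simpa [List.getElem!_cons_zero] using h0
      subst ha
      have hbound : ∀ x ∈ a :: (k + 1) :: t, x ≤ k + 1 := by
        intro x hx
        rcases List.mem_cons.mp hx with rfl | hx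
        · omega
        rcases List.mem_cons.mp hx with rfl | hx
        · exact le_refl _
        · have hxm : x ∈ a :: t := List.mem_cons_of_mem _ hx
          have := mem_M (hperm.subset hxm)
          omega
      refine ⟨a :: (k + 1) :: t, ⟨?_, ?_, ?_, ?_, ?_⟩, ?_⟩
      · exact (perm_insert_iff k a t).mp hperm
      · exact avoids_insert a (k + 1) t [1,2,4,3] 2 rfl (by omega) (by decide) (by decide)
          hbound hav1
      · exact avoids_insert a (k + 1) t [1,3,2,4] 3 rfl (by omega) (by decide) (by decide)
          hbound hav2
      · simp [List.getElem!_cons_zero]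
      · simp [List.getElem!_cons_succ, List.getElem!_cons_zero]
      · simp [List.eraseIdx]
  · -- descents
    rintro π ⟨hperm, hav1, hav2, h0, h1⟩
    obtain ⟨c, r, rfl⟩ := decomp (k + 1) i hn hperm h0 h1
    have hperm' : (i :: c :: r).Perm ((List.range k).map (· + 1)) :=
      (perm_insert_iff k i (c :: r)).mpr hperm
    have hc : c ≤ k := by
      have : c ∈ i :: c :: r := by simp
      have := mem_M (hperm'.subset this)
      omega
    have herase : (i :: (k + 1) :: c :: r).eraseIdx 1 = i :: c :: r := by
      simp [List.eraseIdx]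
    rw [herase]
    have hsnd : (i :: c :: r)[1]! = c := by
      simp [List.getElem!_cons_succ, List.getElem!_cons_zero]
    rw [hsnd]
    have hd1 : descList (i :: (k + 1) :: c :: r) = descList (c :: r) + 1 := by
      rw [descList_cons_cons, descList_cons_cons]
      rw [if_neg (by omega), if_pos (by omega)]
      omega
    have hd2 : descList (i :: c :: r) = (if c < i then 1 else 0) + descList (c :: r) :=
      descList_cons_cons ..
    constructor <;> intro h
    · rw [hd1, hd2, if_pos h]; omega
    · rw [hd1, hd2, if_neg (by omega)]; omega
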